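/- arXiv:1104.2550 — 3 statements merged into one kernel-verified Lean document; each statement's English description precedes it below -/
import Mathlib

section
/- Let P be a probability measure on a space Ω, D ⊆ Ω measurable with 0 < P[D] < 1, and G a real number with 1 ≤ G ≤ P[D]^{-1}. Define a new probability measure Q by dQ = G·dP on D and dQ = ((1−G·P[D])/(1−P[D]))·dP on Ω\D, and let ξ̃ = 𝟙_D/G. Then the expectation of ξ̃ under Q equals P[D], and Var_P(𝟙_D)/Var_Q(ξ̃) = (1−P[D])/(G^{-1}−P[D]). In particular, when G = P[D]^{-1} the variance of ξ̃ under Q is zero. -/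
open MeasureTheory
open scoped Classical ENNReal

theorem stmt0 {Ω : Type*} [MeasurableSpace Ω] (P : Measure Ω) [IsProbabilityMeasure P]
    (D : Set Ω) (hD : MeasurableSet D)
    (hD0 : 0 < (P D).toReal) (hD1 : (P D).toReal < 1)
    (G : ℝ) (hG1 : 1 ≤ G) (hG2 : G ≤ ((P D).toReal)⁻¹)
    (Q : Measure Ω)
    (hQ : Q = P.withDensity (fun ω => if ω ∈ D then ENNReal.ofReal G
        else ENNReal.ofReal ((1 - G * (P D).toReal) / (1 - (P D).toReal))))
    (ξ : Ω → ℝ)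
    (hξ : ξ = fun ω => (Set.indicator D (fun _ => (1:ℝ)) ω) / G) :
    (∫ ω, ξ ω ∂Q = (P D).toReal) ∧
    ((∫ ω, (Set.indicator D (fun _ => (1:ℝ)) ω)^2 ∂P
        - (∫ ω, Set.indicator D (fun _ => (1:ℝ)) ω ∂P)^2) /
      (∫ ω, (ξ ω)^2 ∂Q - (∫ ω, ξ ω ∂Q)^2)
      = (1 - (P D).toReal) / (G⁻¹ - (P D).toReal)) ∧
    (G = ((P D).toReal)⁻¹ → ∫ ω, (ξ ω)^2 ∂Q - (∫ ω, ξ ω ∂Q)^2 = 0) := by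
  set p := (P D).toReal with hp
  have hG0 : (0:ℝ) < G := lt_of_lt_of_le one_pos hG1
  have hG0' : G ≠ 0 := ne_of_gt hG0
  -- Q(D) = G * P(D)
  have hQD : Q D = ENNReal.ofReal G * P D := by
    rw [hQ, withDensity_apply _ hD]
    rw [setLIntegral_congr_fun hD (fun ω hω => if_pos hω)]
    simp [setLIntegral_const]
  have hPfin : P D ≠ ⊤ := measure_ne_top P D
  have hQDr : (Q D).toReal = G * p := by
    rw [hQD, ENNReal.toReal_mul, ENNReal.toReal_ofReal hG0.le]
  -- rewrite ξ and ξ² as indicators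
  have hξ1 : ∀ ω, ξ ω = Set.indicator D (fun _ => G⁻¹) ω := by
    intro ω
    rw [hξ]
    by_cases h : ω ∈ D
    · show D.indicator (fun _ => (1:ℝ)) ω / G = _
      rw [Set.indicator_of_mem h, Set.indicator_of_mem h, one_div]
    · show D.indicator (fun _ => (1:ℝ)) ω / G = _
      rw [Set.indicator_of_notMem h, Set.indicator_of_notMem h, zero_div]
  have hξ2 : ∀ ω, (ξ ω)^2 = Set.indicator D (fun _ => G⁻¹ * G⁻¹) ω := by
    intro ω
    rw [hξ1]
    by_cases h : ω ∈ D <;> simp [Set.indicator_of_mem, Set.indicator_of_notMem, h, sq]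
  have hind2 : ∀ ω, (Set.indicator D (fun _ => (1:ℝ)) ω)^2
      = Set.indicator D (fun _ => (1:ℝ)) ω := by
    intro ω
    by_cases h : ω ∈ D <;> simp [Set.indicator_of_mem, Set.indicator_of_notMem, h]
  -- the four integrals
  have hIQ1 : ∫ ω, ξ ω ∂Q = p := by
    simp_rw [hξ1]
    rw [integral_indicator_const _ hD, smul_eq_mul, measureReal_def, hQDr]
    field_simp
  have hIQ2 : ∫ ω, (ξ ω)^2 ∂Q = p / G := by
    simp_rw [hξ2]
    rw [integral_indicator_const _ hD, smul_eq_mul, measureReal_def, hQDr]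
    field_simp
  have hIP1 : ∫ ω, Set.indicator D (fun _ => (1:ℝ)) ω ∂P = p := by
    rw [integral_indicator_const _ hD, smul_eq_mul, mul_one, measureReal_def]
  have hIP2 : ∫ ω, (Set.indicator D (fun _ => (1:ℝ)) ω)^2 ∂P = p := by
    simp_rw [hind2]; exact hIP1
  refine ⟨hIQ1, ?_, ?_⟩
  · rw [hIQ1, hIQ2, hIP1, hIP2]
    have h1 : p - p^2 = p * (1 - p) := by ring
    have h2 : p / G - p^2 = p * (G⁻¹ - p) := by field_simp
    rw [h1, h2, mul_div_mul_left _ _ (ne_of_gt hD0)]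
  · intro hGp
    rw [hIQ1, hIQ2, hGp]
    field_simp
    ring
end

section
/- In the setting of the importance-sampled measure Q (dQ = b·dP on B, dQ = ((1−b·P[B])/(1−P[B]))·dP on B^c) with ξ̃ = 𝟙_D scaled by the Radon–Nikodym derivative dP/dQ, set β = b·P[D], γ = P[B]/P[D], and a = ((1−γ·P[D])/P[B|D])·((1−P[B|D])/P[D]). Then Var_Q(ξ̃) = P[D]²·( P[B|D]·(1/β + a/(1−γβ)) − 1 ). -/
open MeasureTheory
open scoped Classical ENNReal

theorem stmt2 {Ω : Type*} [MeasurableSpace Ω] (P : Measure Ω) [IsProbabilityMeasure P]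
    (D B : Set Ω) (hD : MeasurableSet D) (hB : MeasurableSet B)
    (hD0 : 0 < (P D).toReal) (hB0 : 0 < (P B).toReal) (hB1 : (P B).toReal < 1)
    (hBD : 0 < (P (B ∩ D)).toReal)
    (b : ℝ) (hb : 0 < b) (hbB : b * (P B).toReal < 1)
    (Q : Measure Ω)
    (hQ : Q = P.withDensity (fun ω => if ω ∈ B then ENNReal.ofReal b
        else ENNReal.ofReal ((1 - b * (P B).toReal) / (1 - (P B).toReal))))
    (ξ : Ω → ℝ)
    (hξ : ξ = fun ω => if ω ∈ B then (1 / b) * Set.indicator D (fun _ => (1:ℝ)) ω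
        else ((1 - (P B).toReal) / (1 - b * (P B).toReal)) * Set.indicator D (fun _ => (1:ℝ)) ω) :
    ∫ ω, (ξ ω)^2 ∂Q - (∫ ω, ξ ω ∂Q)^2
      = ((P D).toReal)^2 *
        (((P (B ∩ D)).toReal / (P D).toReal) *
            (1 / (b * (P D).toReal)
              + ((((1 - ((P B).toReal / (P D).toReal) * (P D).toReal)
                    / ((P (B ∩ D)).toReal / (P D).toReal))
                  * ((1 - (P (B ∩ D)).toReal / (P D).toReal) / (P D).toReal))
                / (1 - ((P B).toReal / (P D).toReal) * (b * (P D).toReal))))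
          - 1) := by
  set pB := (P B).toReal with hpB
  set pD := (P D).toReal with hpD
  set pBD := (P (B ∩ D)).toReal with hpBD
  have h1B : (0:ℝ) < 1 - pB := by linarith
  have h1bB : (0:ℝ) < 1 - b * pB := by linarith
  set c2 : ℝ := (1 - b * pB) / (1 - pB) with hc2
  set c2' : ℝ := (1 - pB) / (1 - b * pB) with hc2'
  have hc2pos : 0 < c2 := div_pos h1bB h1B
  have hc2'pos : 0 < c2' := div_pos h1B h1bB
  have hfin : ∀ s : Set Ω, P s ≠ ∞ := fun s => (measure_lt_top P s).ne
  -- Q of the two pieces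
  have hQBD : Q (B ∩ D) = ENNReal.ofReal b * P (B ∩ D) := by
    rw [hQ, withDensity_apply _ (hB.inter hD)]
    rw [setLIntegral_congr_fun (hB.inter hD)
      ((fun ω hω => if_pos hω.1) :
        Set.EqOn (fun ω => if ω ∈ B then ENNReal.ofReal b
          else ENNReal.ofReal ((1 - b * pB) / (1 - pB))) (fun _ => ENNReal.ofReal b) (B ∩ D))]
    rw [setLIntegral_const, mul_comm]
  have hQBcD : Q (Bᶜ ∩ D) = ENNReal.ofReal c2 * P (Bᶜ ∩ D) := by
    rw [hQ, withDensity_apply _ (hB.compl.inter hD)]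
    rw [setLIntegral_congr_fun (hB.compl.inter hD)
      ((fun ω hω => if_neg hω.1) :
        Set.EqOn (fun ω => if ω ∈ B then ENNReal.ofReal b
          else ENNReal.ofReal ((1 - b * pB) / (1 - pB))) (fun _ => ENNReal.ofReal c2) (Bᶜ ∩ D))]
    rw [setLIntegral_const, mul_comm]
  have hQBDr : (Q (B ∩ D)).toReal = b * pBD := by
    rw [hQBD, ENNReal.toReal_mul, ENNReal.toReal_ofReal hb.le]
  have hQBcDr : (Q (Bᶜ ∩ D)).toReal = c2 * (P (Bᶜ ∩ D)).toReal := by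
    rw [hQBcD, ENNReal.toReal_mul, ENNReal.toReal_ofReal hc2pos.le]
  -- splitting P D
  have hsplit : pBD + (P (Bᶜ ∩ D)).toReal = pD := by
    rw [hpBD, hpD, ← ENNReal.toReal_add (hfin _) (hfin _)]
    congr 1
    rw [Set.inter_comm B D, Set.inter_comm Bᶜ D, ← Set.diff_eq]
    exact measure_inter_add_diff D hB
  -- Q is finite
  have hQfin : IsFiniteMeasure Q := by
    rw [hQ]
    have hle : ∫⁻ ω, (if ω ∈ B then ENNReal.ofReal b
          else ENNReal.ofReal ((1 - b * pB) / (1 - pB))) ∂P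
        ≤ ENNReal.ofReal b + ENNReal.ofReal c2 := by
      calc ∫⁻ ω, (if ω ∈ B then ENNReal.ofReal b
            else ENNReal.ofReal ((1 - b * pB) / (1 - pB))) ∂P
          ≤ ∫⁻ _, (ENNReal.ofReal b + ENNReal.ofReal c2) ∂P := by
            refine lintegral_mono fun ω => ?_
            split
            · exact le_add_right le_rfl
            · exact le_add_left le_rfl
        _ = ENNReal.ofReal b + ENNReal.ofReal c2 := by
            rw [lintegral_const, measure_univ, mul_one]
    exact isFiniteMeasure_withDensity (ne_top_of_le_ne_top (by simp) hle)
  haveI := hQfin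
  -- rewrite ξ as sum of indicators
  have hξeq : ξ = fun ω => (B ∩ D).indicator (fun _ => 1 / b) ω
      + (Bᶜ ∩ D).indicator (fun _ => c2') ω := by
    funext ω
    rw [hξ]
    by_cases hωB : ω ∈ B <;> by_cases hωD : ω ∈ D <;>
      simp [Set.indicator, hωB, hωD, hc2']
  have hξsq : (fun ω => (ξ ω) ^ 2) = fun ω => (B ∩ D).indicator (fun _ => (1 / b) ^ 2) ω
      + (Bᶜ ∩ D).indicator (fun _ => c2' ^ 2) ω := by
    funext ω
    rw [hξ]
    by_cases hωB : ω ∈ B <;> by_cases hωD : ω ∈ D <;>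
      simp [Set.indicator, hωB, hωD, hc2']
  have hint : ∀ (c : ℝ) (s : Set Ω) (hs : MeasurableSet s),
      Integrable (s.indicator (fun _ => c)) Q :=
    fun c s hs => (integrable_const c).indicator hs
  have hI1 : ∫ ω, ξ ω ∂Q = (Q (B ∩ D)).toReal * (1 / b) + (Q (Bᶜ ∩ D)).toReal * c2' := by
    rw [hξeq, integral_add (hint _ _ (hB.inter hD)) (hint _ _ (hB.compl.inter hD)),
      integral_indicator_const _ (hB.inter hD), integral_indicator_const _ (hB.compl.inter hD)]
    simp [smul_eq_mul]
    rfl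
  have hI2 : ∫ ω, (ξ ω) ^ 2 ∂Q
      = (Q (B ∩ D)).toReal * (1 / b) ^ 2 + (Q (Bᶜ ∩ D)).toReal * c2' ^ 2 := by
    rw [hξsq, integral_add (hint _ _ (hB.inter hD)) (hint _ _ (hB.compl.inter hD)),
      integral_indicator_const _ (hB.inter hD), integral_indicator_const _ (hB.compl.inter hD)]
    simp [smul_eq_mul]
    rfl
  rw [hI1, hI2, hQBDr, hQBcDr]
  have hPBcD : (P (Bᶜ ∩ D)).toReal = pD - pBD := by linarith
  rw [hPBcD, hc2', hc2]
  have hpD0 : pD ≠ 0 := ne_of_gt hD0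
  have hpBD0 : pBD ≠ 0 := ne_of_gt hBD
  have e1 : pB / pD * pD = pB := div_mul_cancel₀ _ hpD0
  have e2 : pB / pD * (b * pD) = b * pB := by
    field_simp
  rw [e1, e2]
  have hb0 : b ≠ 0 := ne_of_gt hb
  have h1B0 : (1 - pB) ≠ 0 := ne_of_gt h1B
  have h1bB0 : (1 - b * pB) ≠ 0 := ne_of_gt h1bB
  field_simp
  ring
end

section
/- For f ∈ C² and the Taylor remainder R(a,b) := f(b) − f(a) − f′(a)(b−a), one has the double-integral representation R(a,b) = (b−a)² ∫₀¹ ∫₀^s f″(a + t(b−a)) dt ds, and |R(a,b)| ≤ (1/2)(b−a)²·sup|f″|. Moreover, if f is C^{k+2}, the function (a,b) ↦ R(a,b)/(b−a)² extends to a C^k function of (a,b). -/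
open intervalIntegral MeasureTheory Metric ContinuousLinearMap Set
open scoped Interval

set_option maxHeartbeats 1000000

lemma hasFDeriv_key (w h : ℝ → ℝ) (hw : Continuous w) (hh : ContDiff ℝ 1 h) (p : ℝ × ℝ) :
    HasFDerivAt (fun q : ℝ × ℝ => ∫ t in (0:ℝ)..1, w t * h (q.1 + t * (q.2 - q.1)))
      ((∫ t in (0:ℝ)..1, ((1 - t) * w t) * deriv h (p.1 + t * (p.2 - p.1))) • (fst ℝ ℝ ℝ)
        + (∫ t in (0:ℝ)..1, (t * w t) * deriv h (p.1 + t * (p.2 - p.1))) • (snd ℝ ℝ ℝ)) p := by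
  have hdh : Continuous (deriv h) := hh.continuous_deriv le_rfl
  have hhc : Continuous h := hh.continuous
  set L : ℝ → (ℝ × ℝ →L[ℝ] ℝ) := fun t => (1 - t) • fst ℝ ℝ ℝ + t • snd ℝ ℝ ℝ with hLdef
  have hLcont : Continuous L := by
    apply Continuous.add
    · exact (continuous_const.sub continuous_id).smul continuous_const
    · exact continuous_id.smul continuous_const
  have hLnorm : ∀ t ∈ Icc (0:ℝ) 1, ‖L t‖ ≤ 2 := by
    intro t ht
    apply opNorm_le_bound _ (by norm_num)
    intro v
    have hv : L t v = (1 - t) * v.1 + t * v.2 := by simp [hLdef]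
    rw [hv, Real.norm_eq_abs]
    have h1 : |v.1| ≤ ‖v‖ := by rw [← Real.norm_eq_abs]; exact _root_.norm_fst_le v
    have h2 : |v.2| ≤ ‖v‖ := by rw [← Real.norm_eq_abs]; exact _root_.norm_snd_le v
    have e1 : |(1 - t) * v.1 + t * v.2| ≤ |1 - t| * |v.1| + |t| * |v.2| :=
      (abs_add_le _ _).trans (by rw [abs_mul, abs_mul])
    have ha : |1 - t| = 1 - t := abs_of_nonneg (by linarith [ht.2])
    have hb : |t| = t := abs_of_nonneg ht.1
    rw [ha, hb] at e1
    nlinarith [norm_nonneg v, abs_nonneg v.1, abs_nonneg v.2, ht.1, ht.2]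
  have hdiff : ∀ (t : ℝ) (x : ℝ × ℝ),
      HasFDerivAt (fun q : ℝ × ℝ => w t * h (q.1 + t * (q.2 - q.1)))
        ((w t * deriv h (x.1 + t * (x.2 - x.1))) • L t) x := by
    intro t x
    have hℓ : HasFDerivAt (fun q : ℝ × ℝ => q.1 + t * (q.2 - q.1)) (L t) x := by
      have heq : (fun q : ℝ × ℝ => q.1 + t * (q.2 - q.1)) = fun q => L t q := by
        funext q
        simp [hLdef]
        ring
      rw [heq]
      exact (L t).hasFDerivAt
    have h1 : HasFDerivAt (fun q : ℝ × ℝ => h (q.1 + t * (q.2 - q.1)))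
        (deriv h (x.1 + t * (x.2 - x.1)) • L t) x :=
      ((hh.differentiable one_ne_zero) _).hasDerivAt.comp_hasFDerivAt x hℓ
    simpa [smul_smul] using h1.const_mul (w t)
  have hccont : ContinuousOn (fun z : (ℝ × ℝ) × ℝ => w z.2 * deriv h (z.1.1 + z.2 * (z.1.2 - z.1.1)))
      (closedBall p 1 ×ˢ Icc (0:ℝ) 1) := (by fun_prop : Continuous _).continuousOn
  obtain ⟨C, hC⟩ := ((isCompact_closedBall p 1).prod isCompact_Icc).exists_bound_of_continuousOn hccont
  have hIoc : Ι (0:ℝ) 1 = Ioc (0:ℝ) 1 := uIoc_of_le (by norm_num)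
  have hFmeas : ∀ᶠ x in nhds p, AEStronglyMeasurable
      (fun t => w t * h (x.1 + t * (x.2 - x.1))) (volume.restrict (Ι (0:ℝ) 1)) :=
    Filter.Eventually.of_forall fun x =>
      (Continuous.aestronglyMeasurable (by fun_prop)).restrict
  have hFint : IntervalIntegrable (fun t => w t * h (p.1 + t * (p.2 - p.1))) volume 0 1 :=
    Continuous.intervalIntegrable (by fun_prop) 0 1
  have hF'meas : AEStronglyMeasurable
      (fun t => (w t * deriv h (p.1 + t * (p.2 - p.1))) • L t) (volume.restrict (Ι (0:ℝ) 1)) :=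
    (Continuous.aestronglyMeasurable ((by fun_prop : Continuous fun t =>
      w t * deriv h (p.1 + t * (p.2 - p.1))).smul hLcont)).restrict
  have hbound : ∀ᵐ t ∂(volume : Measure ℝ), t ∈ Ι (0:ℝ) 1 → ∀ x ∈ ball p 1,
      ‖(w t * deriv h (x.1 + t * (x.2 - x.1))) • L t‖ ≤ 2 * C := by
    refine Filter.Eventually.of_forall fun t ht x hx => ?_
    rw [hIoc] at ht
    have ht' : t ∈ Icc (0:ℝ) 1 := ⟨le_of_lt ht.1, ht.2⟩
    have hz : ((x, t) : (ℝ × ℝ) × ℝ) ∈ closedBall p 1 ×ˢ Icc (0:ℝ) 1 :=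
      ⟨ball_subset_closedBall hx, ht'⟩
    have hCnn : (0:ℝ) ≤ C := le_trans (norm_nonneg _) (hC _ hz)
    calc ‖(w t * deriv h (x.1 + t * (x.2 - x.1))) • L t‖
        = ‖w t * deriv h (x.1 + t * (x.2 - x.1))‖ * ‖L t‖ := norm_smul _ (L t)
      _ ≤ C * 2 := mul_le_mul (hC _ hz) (hLnorm t ht') (norm_nonneg _) hCnn
      _ = 2 * C := mul_comm _ _
  have hdiffae : ∀ᵐ t ∂(volume : Measure ℝ), t ∈ Ι (0:ℝ) 1 → ∀ x ∈ ball p 1,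
      HasFDerivAt (fun q : ℝ × ℝ => w t * h (q.1 + t * (q.2 - q.1)))
        ((w t * deriv h (x.1 + t * (x.2 - x.1))) • L t) x :=
    Filter.Eventually.of_forall fun t _ x _ => hdiff t x
  have key := intervalIntegral.hasFDerivAt_integral_of_dominated_of_fderiv_le
    (ball_mem_nhds p one_pos) hFmeas hFint hF'meas hbound intervalIntegrable_const hdiffae
  have hrw : (∫ t in (0:ℝ)..1, (w t * deriv h (p.1 + t * (p.2 - p.1))) • L t)
      = (∫ t in (0:ℝ)..1, ((1 - t) * w t) * deriv h (p.1 + t * (p.2 - p.1))) • (fst ℝ ℝ ℝ)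
        + (∫ t in (0:ℝ)..1, (t * w t) * deriv h (p.1 + t * (p.2 - p.1))) • (snd ℝ ℝ ℝ) := by
    have step1 : (∫ t in (0:ℝ)..1, (w t * deriv h (p.1 + t * (p.2 - p.1))) • L t)
        = ∫ t in (0:ℝ)..1, ((((1 - t) * w t) * deriv h (p.1 + t * (p.2 - p.1))) • (fst ℝ ℝ ℝ)
            + (((t * w t) * deriv h (p.1 + t * (p.2 - p.1))) • (snd ℝ ℝ ℝ))) := by
      apply intervalIntegral.integral_congr
      intro t _
      apply ContinuousLinearMap.ext
      intro v
      simp [hLdef]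
      ring
    rw [step1, intervalIntegral.integral_add
        (Continuous.intervalIntegrable (by fun_prop) 0 1)
        (Continuous.intervalIntegrable (by fun_prop) 0 1),
      intervalIntegral.integral_smul_const, intervalIntegral.integral_smul_const]
  rw [hrw] at key
  exact key

lemma contDiff_key (k : ℕ) : ∀ (w h : ℝ → ℝ), Continuous w → ContDiff ℝ k h →
    ContDiff ℝ k (fun p : ℝ × ℝ => ∫ t in (0:ℝ)..1, w t * h (p.1 + t * (p.2 - p.1))) := by
  induction k with
  | zero =>
    intro w h hw hh
    have hhc : Continuous h := hh.continuous
    rw [show ((0:ℕ) : WithTop ℕ∞) = 0 from rfl, contDiff_zero]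
    exact intervalIntegral.continuous_parametric_intervalIntegral_of_continuous'
      (μ := volume) (f := fun (p : ℝ × ℝ) t => w t * h (p.1 + t * (p.2 - p.1))) (by fun_prop) 0 1
  | succ k ih =>
    intro w h hw hh
    have hh1 : ContDiff ℝ 1 h := hh.of_le (by exact_mod_cast Nat.one_le_iff_ne_zero.mpr k.succ_ne_zero)
    have hcast : ((k + 1 : ℕ) : WithTop ℕ∞) = (k : WithTop ℕ∞) + 1 := by push_cast; ring
    rw [hcast, contDiff_succ_iff_fderiv]
    refine ⟨fun p => (hasFDeriv_key w h hw hh1 p).differentiableAt, ?_, ?_⟩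
    · intro hω
      exact absurd hω (by simp)
    · have hfd : (fderiv ℝ (fun p : ℝ × ℝ => ∫ t in (0:ℝ)..1, w t * h (p.1 + t * (p.2 - p.1))))
          = fun p => (∫ t in (0:ℝ)..1, ((1 - t) * w t) * deriv h (p.1 + t * (p.2 - p.1))) • (fst ℝ ℝ ℝ)
            + (∫ t in (0:ℝ)..1, (t * w t) * deriv h (p.1 + t * (p.2 - p.1))) • (snd ℝ ℝ ℝ) :=
        funext fun p => (hasFDeriv_key w h hw hh1 p).fderiv
      rw [hfd]
      have hdh : ContDiff ℝ k (deriv h) := by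
        exact (contDiff_succ_iff_deriv.mp (show ContDiff ℝ ((k : WithTop ℕ∞) + 1) h by exact_mod_cast hh)).2.2
      exact ((ih (fun t => (1 - t) * w t) (deriv h) (by fun_prop) hdh).smul contDiff_const).add
        ((ih (fun t => t * w t) (deriv h) (by fun_prop) hdh).smul contDiff_const)

lemma taylor_single (f : ℝ → ℝ) (hf2 : ContDiff ℝ 2 f) (a b : ℝ) :
    f b - f a - deriv f a * (b - a)
      = (b - a)^2 * ∫ t in (0:ℝ)..1, (1 - t) * deriv (deriv f) (a + t * (b - a)) := by
  have hd1 : Differentiable ℝ f := hf2.differentiable (by norm_num)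
  have hdf : ContDiff ℝ 1 (deriv f) :=
    (contDiff_succ_iff_deriv.mp (show ContDiff ℝ ((1 : WithTop ℕ∞) + 1) f by exact_mod_cast hf2)).2.2
  have hd2 : Differentiable ℝ (deriv f) := hdf.differentiable one_ne_zero
  have hc2 : Continuous (deriv (deriv f)) := hdf.continuous_deriv le_rfl
  rcases eq_or_ne b a with rfl | hne
  · simp
  have hc0 : b - a ≠ 0 := sub_ne_zero.mpr hne
  have key : ∀ t : ℝ, HasDerivAt
      (fun t => (1 - t) * deriv f (a + t * (b - a)) / (b - a) + f (a + t * (b - a)) / (b - a)^2)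
      ((1 - t) * deriv (deriv f) (a + t * (b - a))) t := by
    intro t
    have hA : HasDerivAt (fun t : ℝ => a + t * (b - a)) (b - a) t := by
      simpa using ((hasDerivAt_id t).mul_const (b - a)).const_add a
    have h1 : HasDerivAt (fun t => deriv f (a + t * (b - a)))
        (deriv (deriv f) (a + t * (b - a)) * (b - a)) t :=
      (hd2 (a + t * (b - a))).hasDerivAt.comp (h₂ := deriv f) t hA
    have h2 : HasDerivAt (fun t => f (a + t * (b - a)))
        (deriv f (a + t * (b - a)) * (b - a)) t :=
      (hd1 (a + t * (b - a))).hasDerivAt.comp t hA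
    have h3 : HasDerivAt (fun t : ℝ => 1 - t) (-1) t := by
      simpa using (hasDerivAt_id t).const_sub 1
    have := ((h3.mul h1).div_const (b - a)).add (h2.div_const ((b - a)^2))
    refine this.congr_deriv ?_
    field_simp
    ring
  have hint : IntervalIntegrable (fun t => (1 - t) * deriv (deriv f) (a + t * (b - a))) volume 0 1 :=
    Continuous.intervalIntegrable (by fun_prop) 0 1
  rw [intervalIntegral.integral_eq_sub_of_hasDerivAt (fun t _ => key t) hint]
  have e1 : a + 1 * (b - a) = b := by ring
  have e0 : a + 0 * (b - a) = a := by ring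
  rw [e1, e0]
  field_simp
  ring

lemma taylor_double (f : ℝ → ℝ) (hf2 : ContDiff ℝ 2 f) (a b : ℝ) :
    f b - f a - deriv f a * (b - a)
      = (b - a)^2 * ∫ s in (0:ℝ)..1, ∫ t in (0:ℝ)..s, deriv (deriv f) (a + t * (b - a)) := by
  have hd1 : Differentiable ℝ f := hf2.differentiable (by norm_num)
  have hdf : ContDiff ℝ 1 (deriv f) :=
    (contDiff_succ_iff_deriv.mp (show ContDiff ℝ ((1 : WithTop ℕ∞) + 1) f by exact_mod_cast hf2)).2.2
  have hd2 : Differentiable ℝ (deriv f) := hdf.differentiable one_ne_zero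
  have hc2 : Continuous (deriv (deriv f)) := hdf.continuous_deriv le_rfl
  rcases eq_or_ne b a with rfl | hne
  · simp
  have hc0 : b - a ≠ 0 := sub_ne_zero.mpr hne
  have hA : ∀ t : ℝ, HasDerivAt (fun t : ℝ => a + t * (b - a)) (b - a) t := fun t => by
    simpa using ((hasDerivAt_id t).mul_const (b - a)).const_add a
  have inner : ∀ s : ℝ, (∫ t in (0:ℝ)..s, deriv (deriv f) (a + t * (b - a)))
      = deriv f (a + s * (b - a)) / (b - a) - deriv f a / (b - a) := by
    intro s
    have key : ∀ t : ℝ, HasDerivAt (fun t => deriv f (a + t * (b - a)) / (b - a))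
        (deriv (deriv f) (a + t * (b - a))) t := by
      intro t
      have h1 : HasDerivAt (fun t => deriv f (a + t * (b - a)))
          (deriv (deriv f) (a + t * (b - a)) * (b - a)) t :=
        (hd2 (a + t * (b - a))).hasDerivAt.comp (h₂ := deriv f) t (hA t)
      refine (h1.div_const (b - a)).congr_deriv ?_
      field_simp
    rw [intervalIntegral.integral_eq_sub_of_hasDerivAt (fun t _ => key t)
      (Continuous.intervalIntegrable (by fun_prop) 0 s)]
    rw [show a + 0 * (b - a) = a by ring]
  simp only [inner]
  have key2 : ∀ s : ℝ, HasDerivAt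
      (fun s => f (a + s * (b - a)) / (b - a)^2 - s * deriv f a / (b - a))
      (deriv f (a + s * (b - a)) / (b - a) - deriv f a / (b - a)) s := by
    intro s
    have h2 : HasDerivAt (fun s => f (a + s * (b - a)))
        (deriv f (a + s * (b - a)) * (b - a)) s :=
      (hd1 (a + s * (b - a))).hasDerivAt.comp s (hA s)
    have h3 : HasDerivAt (fun s : ℝ => s * deriv f a) (deriv f a) s := by
      simpa using (hasDerivAt_id s).mul_const (deriv f a)
    refine ((h2.div_const ((b - a)^2)).sub (h3.div_const (b - a))).congr_deriv ?_
    field_simp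
  rw [intervalIntegral.integral_eq_sub_of_hasDerivAt (fun s _ => key2 s)
    (Continuous.intervalIntegrable (by fun_prop) 0 1)]
  rw [show a + 1 * (b - a) = b by ring, show a + 0 * (b - a) = a by ring]
  field_simp
  ring

theorem stmt13 (k : ℕ) (f : ℝ → ℝ) (hf2 : ContDiff ℝ 2 f)
    (K : ℝ) (hK : ∀ x, |deriv (deriv f) x| ≤ K) :
    (∀ a b : ℝ, f b - f a - deriv f a * (b - a)
      = (b - a)^2 * ∫ s in (0:ℝ)..1, ∫ t in (0:ℝ)..s, deriv (deriv f) (a + t * (b - a))) ∧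
    (∀ a b : ℝ, |f b - f a - deriv f a * (b - a)| ≤ (1/2) * (b - a)^2 * K) ∧
    (ContDiff ℝ ((k : ℕ∞) + 2) f →
      ∃ g : ℝ → ℝ → ℝ,
        ContDiff ℝ (k : ℕ∞) (fun p : ℝ × ℝ => g p.1 p.2) ∧
        (∀ a b : ℝ, a ≠ b →
          g a b = (f b - f a - deriv f a * (b - a)) / (b - a)^2) ∧
        (∀ a : ℝ, g a a = deriv (deriv f) a / 2)) := by
  have hdf : ContDiff ℝ 1 (deriv f) :=
    (contDiff_succ_iff_deriv.mp (show ContDiff ℝ ((1 : WithTop ℕ∞) + 1) f by exact_mod_cast hf2)).2.2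
  have hc2 : Continuous (deriv (deriv f)) := hdf.continuous_deriv le_rfl
  have hK0 : (0:ℝ) ≤ K := (abs_nonneg _).trans (hK 0)
  have half : ∫ t in (0:ℝ)..1, (1 - t) = (1:ℝ)/2 := by
    rw [integral_sub intervalIntegrable_const intervalIntegrable_id, integral_id]
    simp
    norm_num
  refine ⟨taylor_double f hf2, ?_, ?_⟩
  · intro a b
    rw [taylor_single f hf2 a b, abs_mul, abs_of_nonneg (sq_nonneg (b - a))]
    have hI : |∫ t in (0:ℝ)..1, (1 - t) * deriv (deriv f) (a + t * (b - a))| ≤ K/2 := by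
      calc |∫ t in (0:ℝ)..1, (1 - t) * deriv (deriv f) (a + t * (b - a))|
          ≤ ∫ t in (0:ℝ)..1, |(1 - t) * deriv (deriv f) (a + t * (b - a))| := by
            simpa only [Real.norm_eq_abs] using
              intervalIntegral.norm_integral_le_integral_norm (μ := volume)
                (f := fun t => (1 - t) * deriv (deriv f) (a + t * (b - a))) (by norm_num : (0:ℝ) ≤ 1)
        _ ≤ ∫ t in (0:ℝ)..1, (1 - t) * K := by
            apply intervalIntegral.integral_mono_on (by norm_num)
              (Continuous.intervalIntegrable (by fun_prop) 0 1)
              (Continuous.intervalIntegrable (by fun_prop) 0 1)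
            intro t ht
            rw [abs_mul, abs_of_nonneg (by linarith [ht.2] : (0:ℝ) ≤ 1 - t)]
            exact mul_le_mul_of_nonneg_left (hK _) (by linarith [ht.2])
        _ = K/2 := by rw [intervalIntegral.integral_mul_const, half]; ring
    calc (b - a)^2 * |∫ t in (0:ℝ)..1, (1 - t) * deriv (deriv f) (a + t * (b - a))|
        ≤ (b - a)^2 * (K/2) := mul_le_mul_of_nonneg_left hI (sq_nonneg _)
      _ = 1/2 * (b - a)^2 * K := by ring
  · intro hfk
    have h1 : ContDiff ℝ ((k : WithTop ℕ∞) + 1) (deriv f) :=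
      (contDiff_succ_iff_deriv.mp
        (show ContDiff ℝ (((k : ℕ) : WithTop ℕ∞) + 1 + 1) f by exact_mod_cast hfk)).2.2
    have hdd : ContDiff ℝ (k : ℕ) (deriv (deriv f)) := (contDiff_succ_iff_deriv.mp h1).2.2
    refine ⟨fun a b => ∫ t in (0:ℝ)..1, (1 - t) * deriv (deriv f) (a + t * (b - a)), ?_, ?_, ?_⟩
    · exact_mod_cast contDiff_key k (fun t => 1 - t) (deriv (deriv f)) (by fun_prop) hdd
    · intro a b hne
      rw [taylor_single f hf2 a b, mul_comm, mul_div_assoc,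
        div_self (pow_ne_zero 2 (sub_ne_zero.mpr (Ne.symm hne))), mul_one]
    · intro a
      simp only [sub_self, mul_zero, add_zero]
      rw [intervalIntegral.integral_mul_const, half]
      ring
end
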